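/- There exists an absolute constant C > 0 such that for all n, r, k ∈ ℕ with 1 ≤ r ≤ n − 1, setting m := ⌊n/2⌋, the hypergeometric probability satisfies C(m,k)·C(n−m, r−k) / C(n,r) ≤ C·√(n / (r(n−r))). -/

import Mathlib

private lemma le_of_sq_le {a b : ℝ} (ha : 0 ≤ a) (hb : 0 ≤ b) (h : a ^ 2 ≤ b ^ 2) : a ≤ b := by
  calc a = Real.sqrt (a ^ 2) := (Real.sqrt_sq ha).symm
    _ ≤ Real.sqrt (b ^ 2) := Real.sqrt_le_sqrt h
    _ = b := Real.sqrt_sq hb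

private lemma cb_upper (s : ℕ) :
    Real.sqrt ((s : ℝ) + 1 / 2) * (Nat.centralBinom s : ℝ) ≤ 4 ^ s := by
  induction s with
  | zero =>
    have h : Real.sqrt (((0 : ℕ) : ℝ) + 1 / 2) ≤ 1 :=
      Real.sqrt_le_one.mpr (by norm_num)
    simpa [Nat.centralBinom_zero] using h
  | succ s ih =>
    have hrec : ((s : ℝ) + 1) * (Nat.centralBinom (s + 1) : ℝ)
        = 2 * (2 * (s : ℝ) + 1) * (Nat.centralBinom s : ℝ) := by
      exact_mod_cast congrArg (Nat.cast : ℕ → ℝ) (Nat.succ_mul_centralBinom_succ s)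
    have hs1 : (0 : ℝ) < (s : ℝ) + 1 := by positivity
    have hcb : (0 : ℝ) ≤ (Nat.centralBinom s : ℝ) := by positivity
    have key : Real.sqrt ((s : ℝ) + 1 + 1 / 2) * (2 * (2 * (s : ℝ) + 1))
        ≤ 4 * ((s : ℝ) + 1) * Real.sqrt ((s : ℝ) + 1 / 2) := by
      apply le_of_sq_le (by positivity) (by positivity)
      have h1 : Real.sqrt ((s : ℝ) + 1 + 1 / 2) ^ 2 = (s : ℝ) + 1 + 1 / 2 :=
        Real.sq_sqrt (by positivity)
      have h2 : Real.sqrt ((s : ℝ) + 1 / 2) ^ 2 = (s : ℝ) + 1 / 2 :=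
        Real.sq_sqrt (by positivity)
      simp only [mul_pow]
      rw [h1, h2]
      have : (0 : ℝ) ≤ (s : ℝ) := Nat.cast_nonneg s
      nlinarith
    have H : Real.sqrt ((s : ℝ) + 1 + 1 / 2) * (Nat.centralBinom (s + 1) : ℝ) * ((s : ℝ) + 1)
        ≤ 4 ^ (s + 1) * ((s : ℝ) + 1) := by
      calc Real.sqrt ((s : ℝ) + 1 + 1 / 2) * (Nat.centralBinom (s + 1) : ℝ) * ((s : ℝ) + 1)
          = Real.sqrt ((s : ℝ) + 1 + 1 / 2) * (2 * (2 * (s : ℝ) + 1)) * (Nat.centralBinom s : ℝ) := by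
            rw [mul_assoc, mul_comm (Nat.centralBinom (s + 1) : ℝ), hrec]; ring
        _ ≤ 4 * ((s : ℝ) + 1) * Real.sqrt ((s : ℝ) + 1 / 2) * (Nat.centralBinom s : ℝ) :=
            mul_le_mul_of_nonneg_right key hcb
        _ = 4 * ((s : ℝ) + 1) * (Real.sqrt ((s : ℝ) + 1 / 2) * (Nat.centralBinom s : ℝ)) := by ring
        _ ≤ 4 * ((s : ℝ) + 1) * 4 ^ s := by
            apply mul_le_mul_of_nonneg_left ih (by positivity)
        _ = 4 ^ (s + 1) * ((s : ℝ) + 1) := by ring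
    have := le_of_mul_le_mul_right H hs1
    calc Real.sqrt (((s : ℕ) + 1 : ℕ) + 1 / 2) * (Nat.centralBinom (s + 1) : ℝ)
        = Real.sqrt ((s : ℝ) + 1 + 1 / 2) * (Nat.centralBinom (s + 1) : ℝ) := by push_cast; ring_nf
      _ ≤ 4 ^ (s + 1) := this

private lemma cb_lower (s : ℕ) (hs : 1 ≤ s) :
    (4 : ℝ) ^ s ≤ 2 * Real.sqrt s * (Nat.centralBinom s : ℝ) := by
  induction s, hs using Nat.le_induction with
  | base =>
    have h1 : Nat.centralBinom 1 = 2 := rfl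
    rw [h1]
    norm_num [Real.sqrt_one]
  | succ s hs ih =>
    have hrec : ((s : ℝ) + 1) * (Nat.centralBinom (s + 1) : ℝ)
        = 2 * (2 * (s : ℝ) + 1) * (Nat.centralBinom s : ℝ) := by
      exact_mod_cast congrArg (Nat.cast : ℕ → ℝ) (Nat.succ_mul_centralBinom_succ s)
    have hs1 : (0 : ℝ) < (s : ℝ) + 1 := by positivity
    have hcb : (0 : ℝ) ≤ (Nat.centralBinom s : ℝ) := by positivity
    have key : 4 * ((s : ℝ) + 1) * (2 * Real.sqrt s)
        ≤ 2 * Real.sqrt ((s : ℝ) + 1) * (2 * (2 * (s : ℝ) + 1)) := by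
      apply le_of_sq_le (by positivity) (by positivity)
      have h1 : Real.sqrt ((s : ℝ)) ^ 2 = (s : ℝ) := Real.sq_sqrt (Nat.cast_nonneg s)
      have h2 : Real.sqrt ((s : ℝ) + 1) ^ 2 = (s : ℝ) + 1 := Real.sq_sqrt (by positivity)
      simp only [mul_pow]
      rw [h1, h2]
      have : (0 : ℝ) ≤ (s : ℝ) := Nat.cast_nonneg s
      nlinarith
    have H : 4 ^ (s + 1) * ((s : ℝ) + 1)
        ≤ 2 * Real.sqrt ((s : ℝ) + 1) * (Nat.centralBinom (s + 1) : ℝ) * ((s : ℝ) + 1) := by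
      calc (4 : ℝ) ^ (s + 1) * ((s : ℝ) + 1) = 4 * ((s : ℝ) + 1) * 4 ^ s := by ring
        _ ≤ 4 * ((s : ℝ) + 1) * (2 * Real.sqrt s * (Nat.centralBinom s : ℝ)) :=
            mul_le_mul_of_nonneg_left ih (by positivity)
        _ = 4 * ((s : ℝ) + 1) * (2 * Real.sqrt s) * (Nat.centralBinom s : ℝ) := by ring
        _ ≤ 2 * Real.sqrt ((s : ℝ) + 1) * (2 * (2 * (s : ℝ) + 1)) * (Nat.centralBinom s : ℝ) :=
            mul_le_mul_of_nonneg_right key hcb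
        _ = 2 * Real.sqrt ((s : ℝ) + 1) * (2 * (2 * (s : ℝ) + 1) * (Nat.centralBinom s : ℝ)) := by ring
        _ = 2 * Real.sqrt ((s : ℝ) + 1) * (((s : ℝ) + 1) * (Nat.centralBinom (s + 1) : ℝ)) := by
            rw [hrec]
        _ = 2 * Real.sqrt ((s : ℝ) + 1) * (Nat.centralBinom (s + 1) : ℝ) * ((s : ℝ) + 1) := by ring
    have := le_of_mul_le_mul_right H hs1
    calc (4 : ℝ) ^ (s + 1) ≤ 2 * Real.sqrt ((s : ℝ) + 1) * (Nat.centralBinom (s + 1) : ℝ) := this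
      _ = 2 * Real.sqrt (((s : ℕ) + 1 : ℕ)) * (Nat.centralBinom (s + 1) : ℝ) := by push_cast; ring_nf

private lemma mid_upper (n : ℕ) : Real.sqrt n * (n.choose (n / 2) : ℝ) ≤ 2 * 2 ^ n := by
  rcases Nat.even_or_odd n with ⟨s, rfl⟩ | ⟨s, rfl⟩
  · have hdiv : (s + s) / 2 = s := by omega
    have h2s : s + s = 2 * s := by omega
    rw [hdiv, h2s]
    have hcb : (2 * s).choose s = Nat.centralBinom s := rfl
    rw [hcb]
    have hsq : Real.sqrt ((2 * s : ℕ) : ℝ) ≤ 2 * Real.sqrt ((s : ℝ) + 1 / 2) := by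
      apply le_of_sq_le (Real.sqrt_nonneg _) (by positivity)
      simp only [mul_pow]
      rw [Real.sq_sqrt (by positivity), Real.sq_sqrt (by positivity)]
      push_cast; nlinarith [Nat.cast_nonneg (α := ℝ) s]
    calc Real.sqrt ((2 * s : ℕ) : ℝ) * (Nat.centralBinom s : ℝ)
        ≤ 2 * Real.sqrt ((s : ℝ) + 1 / 2) * (Nat.centralBinom s : ℝ) := by
          apply mul_le_mul_of_nonneg_right hsq (by positivity)
      _ = 2 * (Real.sqrt ((s : ℝ) + 1 / 2) * (Nat.centralBinom s : ℝ)) := by ring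
      _ ≤ 2 * 4 ^ s := by
          have := cb_upper s; nlinarith
      _ = 2 * 2 ^ (2 * s) := by rw [pow_mul]; norm_num
  · have hdiv : (2 * s + 1) / 2 = s := by omega
    rw [hdiv]
    have hNN : (2 * s + 1).choose s ≤ 2 * Nat.centralBinom s := by
      cases s with
      | zero => decide
      | succ t =>
        have h1 : (2 * (t + 1) + 1).choose (t + 1)
            = (2 * (t + 1)).choose t + (2 * (t + 1)).choose (t + 1) := by
          have := Nat.choose_succ_succ' (2 * (t + 1)) t
          simpa [Nat.add_comm] using this
        have h2 : (2 * (t + 1)).choose t ≤ (2 * (t + 1)).choose ((2 * (t + 1)) / 2) :=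
          Nat.choose_le_middle _ _
        have h3 : (2 * (t + 1)) / 2 = t + 1 := by omega
        have hc : Nat.centralBinom (t + 1) = (2 * (t + 1)).choose (t + 1) := rfl
        rw [h3] at h2
        omega
    have hsq : Real.sqrt ((2 * s + 1 : ℕ) : ℝ) ≤ 2 * Real.sqrt ((s : ℝ) + 1 / 2) := by
      apply le_of_sq_le (Real.sqrt_nonneg _) (by positivity)
      simp only [mul_pow]
      rw [Real.sq_sqrt (by positivity), Real.sq_sqrt (by positivity)]
      push_cast; nlinarith [Nat.cast_nonneg (α := ℝ) s]
    calc Real.sqrt ((2 * s + 1 : ℕ) : ℝ) * ((2 * s + 1).choose s : ℝ)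
        ≤ (2 * Real.sqrt ((s : ℝ) + 1 / 2)) * ((2 * Nat.centralBinom s : ℕ) : ℝ) := by
          apply mul_le_mul hsq (by exact_mod_cast hNN) (by positivity) (by positivity)
      _ = 4 * (Real.sqrt ((s : ℝ) + 1 / 2) * (Nat.centralBinom s : ℝ)) := by push_cast; ring
      _ ≤ 4 * 4 ^ s := by have := cb_upper s; nlinarith
      _ = 2 * 2 ^ (2 * s + 1) := by rw [pow_succ, pow_mul]; norm_num; ring

private lemma mid_lower (n : ℕ) (hn : 1 ≤ n) :
    (2 : ℝ) ^ n ≤ 4 * Real.sqrt n * (n.choose (n / 2) : ℝ) := by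
  rcases Nat.even_or_odd n with ⟨s, rfl⟩ | ⟨s, rfl⟩
  · have hs : 1 ≤ s := by omega
    have hdiv : (s + s) / 2 = s := by omega
    have h2s : s + s = 2 * s := by omega
    rw [hdiv, h2s]
    have hcb : (2 * s).choose s = Nat.centralBinom s := rfl
    rw [hcb]
    have hsq : Real.sqrt (s : ℝ) ≤ Real.sqrt ((2 * s : ℕ) : ℝ) := by
      apply Real.sqrt_le_sqrt; push_cast; nlinarith [Nat.cast_nonneg (α := ℝ) s]
    have hcbpos : (0 : ℝ) ≤ (Nat.centralBinom s : ℝ) := by positivity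
    calc (2 : ℝ) ^ (2 * s) = 4 ^ s := by rw [pow_mul]; norm_num
      _ ≤ 2 * Real.sqrt (s : ℝ) * (Nat.centralBinom s : ℝ) := cb_lower s hs
      _ ≤ 4 * Real.sqrt ((2 * s : ℕ) : ℝ) * (Nat.centralBinom s : ℝ) := by
          apply mul_le_mul_of_nonneg_right _ hcbpos
          nlinarith [Real.sqrt_nonneg ((s : ℝ)), Real.sqrt_nonneg (((2 * s : ℕ) : ℝ))]
  · have hdiv : (2 * s + 1) / 2 = s := by omega
    rw [hdiv]
    cases s with
    | zero =>
      norm_num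
    | succ t =>
      set s := t + 1 with hs'
      have hs : 1 ≤ s := by omega
      have hNN : Nat.centralBinom s ≤ (2 * s + 1).choose s := by
        calc Nat.centralBinom s = (2 * s).choose s := rfl
          _ ≤ (2 * s + 1).choose s := Nat.choose_le_succ _ _
      have hsq : Real.sqrt (s : ℝ) ≤ Real.sqrt ((2 * s + 1 : ℕ) : ℝ) := by
        apply Real.sqrt_le_sqrt; push_cast; nlinarith [Nat.cast_nonneg (α := ℝ) s]
      calc (2 : ℝ) ^ (2 * s + 1) = 2 * 4 ^ s := by rw [pow_succ, pow_mul]; norm_num; ring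
        _ ≤ 2 * (2 * Real.sqrt (s : ℝ) * (Nat.centralBinom s : ℝ)) := by
            have := cb_lower s hs; nlinarith
        _ = 4 * Real.sqrt (s : ℝ) * (Nat.centralBinom s : ℝ) := by ring
        _ ≤ 4 * Real.sqrt ((2 * s + 1 : ℕ) : ℝ) * (((2 * s + 1).choose s : ℕ) : ℝ) := by
            apply mul_le_mul
            · nlinarith [Real.sqrt_nonneg ((s : ℝ))]
            · exact_mod_cast hNN
            · positivity
            · positivity

private lemma choose_identity {n m r k : ℕ} (hkr : k ≤ r) (hkm : k ≤ m)
    (hrn : r ≤ n) (hmn : m ≤ n) (h : r - k ≤ n - m) :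
    n.choose r * (r.choose k * (n - r).choose (m - k)) =
      n.choose m * (m.choose k * (n - m).choose (r - k)) := by
  set N := n - k with hN
  set a := r - k with ha
  set b := m - k with hb
  have h1 : n - r = N - a := by omega
  have h2 : n - m = N - b := by omega
  have hab : a + b ≤ N := by omega
  have e1 : n.choose r * r.choose k = n.choose k * N.choose a := Nat.choose_mul hkr
  have e2 : n.choose m * m.choose k = n.choose k * N.choose b := Nat.choose_mul hkm
  have t1 : N.choose (a + b) * (a + b).choose a = N.choose a * (N - a).choose b := by
    have := Nat.choose_mul (n := N) (Nat.le_add_right a b)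
    simpa [Nat.add_sub_cancel_left] using this
  have t2 : N.choose (a + b) * (a + b).choose b = N.choose b * (N - b).choose a := by
    have := Nat.choose_mul (n := N) (Nat.le_add_left b a)
    simpa [Nat.add_sub_cancel] using this
  have hsymm : (a + b).choose a = (a + b).choose b := Nat.choose_symm_add
  have core : N.choose a * (N - a).choose b = N.choose b * (N - b).choose a := by
    rw [← t1, ← t2, hsymm]
  calc n.choose r * (r.choose k * (n - r).choose b)
      = (n.choose r * r.choose k) * (N - a).choose b := by rw [h1]; ring
    _ = n.choose k * (N.choose a * (N - a).choose b) := by rw [e1]; ring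
    _ = n.choose k * (N.choose b * (N - b).choose a) := by rw [core]
    _ = (n.choose m * m.choose k) * (N - b).choose a := by rw [e2]; ring
    _ = n.choose m * (m.choose k * (n - m).choose a) := by rw [h2]; ring

theorem hypergeometric_pmf_bound :
    ∃ C : ℝ, 0 < C ∧ ∀ n r k : ℕ, 1 ≤ r → r < n →
      (if k ≤ r then ((n / 2).choose k * (n - n / 2).choose (r - k) : ℝ) else 0) /
          (n.choose r : ℝ) ≤
        C * Real.sqrt ((n : ℝ) / ((r : ℝ) * ((n : ℝ) - (r : ℝ)))) := by
  refine ⟨16, by norm_num, ?_⟩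
  intro n r k hr hrn
  have hrhs : (0 : ℝ) ≤ 16 * Real.sqrt ((n : ℝ) / ((r : ℝ) * ((n : ℝ) - (r : ℝ)))) := by
    positivity
  split_ifs with hk
  · -- k ≤ r
    set m := n / 2 with hm
    by_cases hkm : k ≤ m
    · by_cases hrk : r - k ≤ n - m
      · -- main case
        have hmn : m ≤ n := Nat.div_le_self n 2
        have hn2 : 2 ≤ n := by omega
        have h1m : 1 ≤ m := by omega
        have hnm : 1 ≤ n - m := by omega
        have hnr1 : 1 ≤ n - r := by omega
        have Hid := choose_identity hk hkm (le_of_lt hrn) hmn hrk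
        have hDpos : (0 : ℝ) < (n.choose r : ℝ) := by
          exact_mod_cast Nat.choose_pos (le_of_lt hrn)
        have hMpos : (0 : ℝ) < (n.choose m : ℝ) := by exact_mod_cast Nat.choose_pos hmn
        have key : ((m.choose k : ℝ) * ((n - m).choose (r - k) : ℝ)) / (n.choose r : ℝ)
            = ((r.choose k : ℝ) * ((n - r).choose (m - k) : ℝ)) / (n.choose m : ℝ) := by
          rw [div_eq_div_iff hDpos.ne' hMpos.ne']
          have hc := congrArg (Nat.cast : ℕ → ℝ) Hid
          push_cast at hc
          linarith [hc]
        rw [key, div_le_iff₀ hMpos]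
        have hcast : (n : ℝ) - (r : ℝ) = ((n - r : ℕ) : ℝ) := by
          rw [Nat.cast_sub (le_of_lt hrn)]
        rw [show (n : ℝ) / ((r : ℝ) * ((n : ℝ) - (r : ℝ)))
              = (n : ℝ) / ((r : ℝ) * ((n - r : ℕ) : ℝ)) from by rw [hcast]]
        have hsqrt : Real.sqrt ((n : ℝ) / ((r : ℝ) * ((n - r : ℕ) : ℝ)))
            = Real.sqrt n / (Real.sqrt r * Real.sqrt ((n - r : ℕ) : ℝ)) := by
          rw [Real.sqrt_div (Nat.cast_nonneg n), Real.sqrt_mul (Nat.cast_nonneg r)]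
        rw [hsqrt]
        have srp : (0 : ℝ) < Real.sqrt r := Real.sqrt_pos.mpr (by exact_mod_cast hr)
        have snrp : (0 : ℝ) < Real.sqrt ((n - r : ℕ) : ℝ) :=
          Real.sqrt_pos.mpr (by exact_mod_cast hnr1)
        rw [show (16 : ℝ) * (Real.sqrt n / (Real.sqrt r * Real.sqrt ((n - r : ℕ) : ℝ)))
                * (n.choose m : ℝ)
              = (16 * Real.sqrt n * (n.choose m : ℝ))
                / (Real.sqrt r * Real.sqrt ((n - r : ℕ) : ℝ)) from by ring]
        rw [le_div_iff₀ (by positivity)]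
        calc (r.choose k : ℝ) * ((n - r).choose (m - k) : ℝ)
              * (Real.sqrt r * Real.sqrt ((n - r : ℕ) : ℝ))
            = (Real.sqrt r * (r.choose k : ℝ))
              * (Real.sqrt ((n - r : ℕ) : ℝ) * ((n - r).choose (m - k) : ℝ)) := by ring
          _ ≤ (Real.sqrt r * (r.choose (r / 2) : ℝ))
              * (Real.sqrt ((n - r : ℕ) : ℝ) * ((n - r).choose ((n - r) / 2) : ℝ)) := by
              apply mul_le_mul
              · apply mul_le_mul_of_nonneg_left _ (Real.sqrt_nonneg _)
                exact_mod_cast Nat.choose_le_middle k r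
              · apply mul_le_mul_of_nonneg_left _ (Real.sqrt_nonneg _)
                exact_mod_cast Nat.choose_le_middle (m - k) (n - r)
              · positivity
              · positivity
          _ ≤ (2 * 2 ^ r) * (2 * 2 ^ (n - r)) := by
              apply mul_le_mul (mid_upper r) (mid_upper (n - r)) (by positivity) (by positivity)
          _ = 4 * 2 ^ n := by
              rw [show (2 : ℝ) * 2 ^ r * (2 * 2 ^ (n - r)) = 4 * (2 ^ r * 2 ^ (n - r)) from by
                ring, ← pow_add, show r + (n - r) = n by omega]
          _ ≤ 4 * (4 * Real.sqrt n * (n.choose m : ℝ)) := by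
              have := mid_lower n (by omega)
              rw [hm]
              nlinarith
          _ = 16 * Real.sqrt n * (n.choose m : ℝ) := by ring
      · have hz : (n - m).choose (r - k) = 0 := Nat.choose_eq_zero_of_lt (by omega)
        rw [hz]
        norm_num
        positivity
    · have hz : m.choose k = 0 := Nat.choose_eq_zero_of_lt (by omega)
      rw [hz]
      norm_num
      positivity
  · rw [zero_div]
    exact hrhs
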